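/- Let 0 < m < n and let t₁,…,tₙ ∈ ℂ be pairwise distinct. Then Σ_{S ⊆ {1,…,n}, |S| = m} 1/∏_{i∈S, j∉S}(tᵢ − tⱼ) = 0. -/

import Mathlib

open Finset Polynomial

/-- Auxiliary polynomial: the contribution of the subset `S` to the cleared-denominator
polynomial, with the variable `z` singled out. -/
private noncomputable def grassG {n : ℕ} (t : Fin n → ℂ) (z : Fin n) (S : Finset (Fin n)) :
    Polynomial ℂ :=
  if z ∈ S then
    Polynomial.C (∏ i ∈ S.erase z, ∏ k ∈ Sᶜ, (t i - t k))⁻¹ * ∏ k ∈ S.erase z, (X - C (t k))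
  else
    Polynomial.C ((-1) ^ S.card * (∏ i ∈ S, ∏ k ∈ Sᶜ.erase z, (t i - t k))⁻¹) *
      ∏ k ∈ Sᶜ.erase z, (X - C (t k))

private lemma prod_sub_swap {n : ℕ} (t : Fin n → ℂ) (j : Fin n) (T : Finset (Fin n)) :
    ∏ k ∈ T, (t j - t k) = (-1) ^ T.card * ∏ k ∈ T, (t k - t j) := by
  calc ∏ k ∈ T, (t j - t k) = ∏ k ∈ T, (-1) * (t k - t j) := by
        refine Finset.prod_congr rfl fun k _ => by ring
    _ = (-1) ^ T.card * ∏ k ∈ T, (t k - t j) := by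
        rw [Finset.prod_mul_distrib, Finset.prod_const]

private lemma grassG_cancel {n : ℕ} (t : Fin n → ℂ) (ht : Function.Injective t)
    {z j : Fin n} (hjz : j ≠ z) {S : Finset (Fin n)} (hzS : z ∈ S) (hjS : j ∉ S) :
    (grassG t z S).eval (t j) + (grassG t z (insert j (S.erase z))).eval (t j) = 0 := by
  classical
  set T : Finset (Fin n) := S.erase z with hT
  set U : Finset (Fin n) := Sᶜ.erase j with hU
  set S' : Finset (Fin n) := insert j T with hS'
  have hjT : j ∉ T := fun h => hjS (Finset.mem_of_mem_erase h)
  have hzT : z ∉ T := Finset.notMem_erase _ _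
  have hzS' : z ∉ S' := by
    simp only [hS', Finset.mem_insert]
    push_neg
    exact ⟨fun h => hjz h.symm, hzT⟩
  have hjSc : j ∈ Sᶜ := Finset.mem_compl.2 hjS
  have hSc : Sᶜ = insert j U := (Finset.insert_erase hjSc).symm
  have hjU : j ∉ U := Finset.notMem_erase _ _
  have hzU : z ∉ U := fun h => (Finset.mem_compl.1 (Finset.mem_of_mem_erase h)) hzS
  have hS'c : S'ᶜ = insert z U := by
    rw [hS', hU, hT, Finset.compl_insert, Finset.compl_erase, Finset.erase_insert_of_ne hjz.symm]
  have hScard : 0 < S.card := Finset.card_pos.2 ⟨z, hzS⟩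
  have hTcard : S.card = T.card + 1 := by
    rw [hT, Finset.card_erase_of_mem hzS]; omega
  have hS'card : S'.card = S.card := by
    rw [hS', Finset.card_insert_of_notMem hjT]; omega
  have hS'cez : S'ᶜ.erase z = U := by rw [hS'c, Finset.erase_insert hzU]
  -- nonzeroness
  have hne : ∀ a b : Fin n, a ≠ b → t a - t b ≠ 0 := fun a b h =>
    sub_ne_zero.2 fun e => h (ht e)
  have hTS : ∀ i ∈ T, i ∈ S := fun i hi => Finset.mem_of_mem_erase hi
  have hUSc : ∀ k ∈ U, k ∉ S := fun k hk => Finset.mem_compl.1 (Finset.mem_of_mem_erase hk)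
  have hQ : (∏ i ∈ T, ∏ k ∈ U, (t i - t k)) ≠ 0 := by
    rw [Finset.prod_ne_zero_iff]
    intro i hi
    rw [Finset.prod_ne_zero_iff]
    intro k hk
    exact hne i k (fun h => hUSc k hk (h ▸ hTS i hi))
  have hP : (∏ i ∈ T, (t i - t j)) ≠ 0 := by
    rw [Finset.prod_ne_zero_iff]
    intro i hi
    exact hne i j (fun h => hjS (h ▸ hTS i hi))
  have hR : (∏ k ∈ U, (t j - t k)) ≠ 0 := by
    rw [Finset.prod_ne_zero_iff]
    intro k hk
    exact hne j k (fun h => hjU (h ▸ hk))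
  -- evaluate the two polynomials
  have E1 : (grassG t z S).eval (t j)
      = (∏ i ∈ T, ∏ k ∈ Sᶜ, (t i - t k))⁻¹ * ∏ k ∈ T, (t j - t k) := by
    rw [grassG, if_pos hzS]
    simp [eval_prod]
    rfl
  have E2 : (grassG t z S').eval (t j)
      = (-1) ^ S.card * (∏ i ∈ S', ∏ k ∈ U, (t i - t k))⁻¹ * ∏ k ∈ U, (t j - t k) := by
    rw [grassG, if_neg hzS', hS'cez, hS'card]
    simp [eval_prod, mul_assoc]
  have r1 : ∏ i ∈ T, ∏ k ∈ Sᶜ, (t i - t k)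
      = (∏ i ∈ T, (t i - t j)) * ∏ i ∈ T, ∏ k ∈ U, (t i - t k) := by
    rw [hSc, ← Finset.prod_mul_distrib]
    exact Finset.prod_congr rfl fun i _ => Finset.prod_insert hjU
  have r2 : ∏ i ∈ S', ∏ k ∈ U, (t i - t k)
      = (∏ k ∈ U, (t j - t k)) * ∏ i ∈ T, ∏ k ∈ U, (t i - t k) := by
    rw [hS', Finset.prod_insert hjT]
  have r3 : ∏ k ∈ T, (t j - t k) = (-1) ^ T.card * ∏ k ∈ T, (t k - t j) := prod_sub_swap t j T
  have r4 : ∏ k ∈ T, (t k - t j) = ∏ i ∈ T, (t i - t j) := rfl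
  rw [E1, E2, r1, r2, r3, r4, hTcard, pow_succ]
  field_simp
  ring

private lemma grassG_eval_z {n : ℕ} (t : Fin n → ℂ) (ht : Function.Injective t) (z : Fin n)
    (S : Finset (Fin n)) :
    (grassG t z S).eval (t z)
      = (∏ i ∈ S, ∏ k ∈ Sᶜ, (t i - t k))⁻¹ * ∏ k ∈ Finset.univ.erase z, (t z - t k) := by
  classical
  have hne : ∀ a b : Fin n, a ≠ b → t a - t b ≠ 0 := fun a b h =>
    sub_ne_zero.2 fun e => h (ht e)
  by_cases hzS : z ∈ S
  · set T : Finset (Fin n) := S.erase z with hT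
    have hzT : z ∉ T := Finset.notMem_erase _ _
    have hS : S = insert z T := (Finset.insert_erase hzS).symm
    have hzSc : z ∉ Sᶜ := fun h => (Finset.mem_compl.1 h) hzS
    have hsplit : Finset.univ.erase z = T ∪ Sᶜ := by
      ext x
      simp only [Finset.mem_erase, Finset.mem_univ, and_true, Finset.mem_union, hT,
        Finset.mem_compl]
      constructor
      · intro hx
        by_cases hxS : x ∈ S
        · exact Or.inl ⟨hx, hxS⟩
        · exact Or.inr hxS
      · rintro (⟨hx, _⟩ | hx)
        · exact hx
        · exact fun h => hx (h ▸ hzS)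
    have hdisj : Disjoint T Sᶜ := by
      rw [Finset.disjoint_right]
      intro a ha
      exact fun haT => (Finset.mem_compl.1 ha) (Finset.mem_of_mem_erase haT)
    have hden : ∏ i ∈ S, ∏ k ∈ Sᶜ, (t i - t k)
        = (∏ k ∈ Sᶜ, (t z - t k)) * ∏ i ∈ T, ∏ k ∈ Sᶜ, (t i - t k) := by
      rw [hS, Finset.prod_insert hzT]
    have hc : (∏ i ∈ T, ∏ k ∈ Sᶜ, (t i - t k)) ≠ 0 := by
      rw [Finset.prod_ne_zero_iff]
      intro i hi
      rw [Finset.prod_ne_zero_iff]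
      intro k hk
      exact hne i k fun h =>
        (Finset.mem_compl.1 hk) (h ▸ Finset.mem_of_mem_erase hi)
    have hsc : (∏ k ∈ Sᶜ, (t z - t k)) ≠ 0 := by
      rw [Finset.prod_ne_zero_iff]
      intro k hk
      exact hne z k fun h => (Finset.mem_compl.1 hk) (h ▸ hzS)
    rw [grassG, if_pos hzS]
    simp only [eval_mul, eval_C, eval_prod, eval_sub, eval_X, ← hT]
    rw [hden, hsplit, Finset.prod_union hdisj]
    field_simp
  · set U : Finset (Fin n) := Sᶜ.erase z with hU
    have hzSc : z ∈ Sᶜ := Finset.mem_compl.2 hzS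
    have hzU : z ∉ U := Finset.notMem_erase _ _
    have hSc : Sᶜ = insert z U := (Finset.insert_erase hzSc).symm
    have hsplit : Finset.univ.erase z = S ∪ U := by
      ext x
      simp only [Finset.mem_erase, Finset.mem_univ, and_true, Finset.mem_union, hU,
        Finset.mem_erase, Finset.mem_compl]
      constructor
      · intro hx
        by_cases hxS : x ∈ S
        · exact Or.inl hxS
        · exact Or.inr ⟨hx, hxS⟩
      · rintro (hx | ⟨hx, _⟩)
        · exact fun h => hzS (h ▸ hx)
        · exact hx
    have hdisj : Disjoint S U := by
      rw [Finset.disjoint_right]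
      intro a ha
      exact fun haS => (Finset.mem_compl.1 (Finset.mem_of_mem_erase ha)) haS
    have hden : ∏ i ∈ S, ∏ k ∈ Sᶜ, (t i - t k)
        = (∏ i ∈ S, (t i - t z)) * ∏ i ∈ S, ∏ k ∈ U, (t i - t k) := by
      rw [← Finset.prod_mul_distrib]
      refine Finset.prod_congr rfl fun i _ => ?_
      rw [hSc, Finset.prod_insert hzU]
    have hb : (∏ i ∈ S, ∏ k ∈ U, (t i - t k)) ≠ 0 := by
      rw [Finset.prod_ne_zero_iff]
      intro i hi
      rw [Finset.prod_ne_zero_iff]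
      intro k hk
      exact hne i k fun h =>
        (Finset.mem_compl.1 (Finset.mem_of_mem_erase hk)) (h ▸ hi)
    have hs : (∏ i ∈ S, (t z - t i)) ≠ 0 := by
      rw [Finset.prod_ne_zero_iff]
      intro i hi
      exact hne z i fun h => hzS (h ▸ hi)
    have hflip : ∏ i ∈ S, (t i - t z) = (-1) ^ S.card * ∏ i ∈ S, (t z - t i) := by
      calc ∏ i ∈ S, (t i - t z) = ∏ i ∈ S, (-1) * (t z - t i) :=
            Finset.prod_congr rfl fun i _ => by ring
        _ = (-1) ^ S.card * ∏ i ∈ S, (t z - t i) := by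
            rw [Finset.prod_mul_distrib, Finset.prod_const]
    have hneg : ((-1 : ℂ)) ^ S.card ≠ 0 := pow_ne_zero _ (by norm_num)
    have hsq : ((-1 : ℂ)) ^ S.card * ((-1 : ℂ)) ^ S.card = 1 := by
      rw [← pow_add]; exact Even.neg_one_pow ⟨S.card, rfl⟩
    have hbb : (∏ i ∈ S, ∏ k ∈ U, (t i - t k)) * (∏ i ∈ S, ∏ k ∈ U, (t i - t k))⁻¹ = 1 :=
      mul_inv_cancel₀ hb
    have hd : ((-1 : ℂ)) ^ S.card * (∏ i ∈ S, (t z - t i)) *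
        (∏ i ∈ S, ∏ k ∈ U, (t i - t k)) ≠ 0 := mul_ne_zero (mul_ne_zero hneg hs) hb
    rw [grassG, if_neg hzS]
    simp only [eval_mul, eval_C, eval_prod, eval_sub, eval_X, ← hU]
    rw [hden, hflip, hsplit, Finset.prod_union hdisj, eq_comm, inv_mul_eq_iff_eq_mul₀ hd]
    calc (∏ x ∈ S, (t z - t x)) * ∏ x ∈ U, (t z - t x)
        = ((-1 : ℂ) ^ S.card * (-1 : ℂ) ^ S.card) *
            ((∏ i ∈ S, ∏ k ∈ U, (t i - t k)) * (∏ i ∈ S, ∏ k ∈ U, (t i - t k))⁻¹) *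
            ((∏ i ∈ S, (t z - t i)) * ∏ k ∈ U, (t z - t k)) := by
          rw [hsq, hbb, one_mul, one_mul]
      _ = ((-1 : ℂ)) ^ S.card * (∏ i ∈ S, (t z - t i)) * (∏ i ∈ S, ∏ k ∈ U, (t i - t k)) *
          ((-1 : ℂ) ^ S.card * (∏ i ∈ S, ∏ k ∈ U, (t i - t k))⁻¹ * ∏ k ∈ U, (t z - t k)) := by
          ring

/-- For `0 < m < n` and pairwise distinct `t₁, …, tₙ`, the push-forward of the unit class on
`Grass_m(ℂⁿ)` vanishes: `Σ_{|S|=m} 1 / ∏_{i∈S, j∉S}(tᵢ - tⱼ) = 0`. -/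
theorem grassmannian_unit_class_pushforward_vanishes (m n : ℕ) (hm : 0 < m) (hmn : m < n)
    (t : Fin n → ℂ) (ht : Function.Injective t) :
    ∑ S ∈ Finset.powersetCard m (Finset.univ : Finset (Fin n)),
      1 / ∏ i ∈ S, ∏ j ∈ Sᶜ, (t i - t j) = 0 := by
  classical
  have hn2 : 2 ≤ n := by omega
  set z : Fin n := ⟨0, by omega⟩ with hz
  set 𝒮 : Finset (Finset (Fin n)) := Finset.powersetCard m (Finset.univ : Finset (Fin n))
    with h𝒮
  set P : Polynomial ℂ := ∑ S ∈ 𝒮, grassG t z S with hPdef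
  have hcard : ∀ S ∈ 𝒮, S.card = m := fun S hS => Finset.mem_powersetCard_univ.1 hS
  have hne : ∀ a b : Fin n, a ≠ b → t a - t b ≠ 0 := fun a b h =>
    sub_ne_zero.2 fun e => h (ht e)
  -- the generic degree bound for each summand
  have key : ∀ (c : ℂ) (T : Finset (Fin n)),
      (Polynomial.C c * ∏ k ∈ T, (X - C (t k))).natDegree ≤ T.card := by
    intro c T
    refine natDegree_mul_le.trans ?_
    rw [natDegree_C, zero_add]
    refine (Polynomial.natDegree_prod_le _ _).trans ?_
    simp [Polynomial.natDegree_X_sub_C]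
  have hdeg : P.natDegree ≤ n - 2 := by
    refine Polynomial.natDegree_sum_le_of_forall_le _ _ ?_
    intro S hS
    have hSm := hcard S hS
    rw [grassG]
    split_ifs with h
    · refine (key _ _).trans ?_
      rw [Finset.card_erase_of_mem h, hSm]
      omega
    · refine (key _ _).trans ?_
      have hzc : z ∈ Sᶜ := Finset.mem_compl.2 h
      rw [Finset.card_erase_of_mem hzc, Finset.card_compl, Fintype.card_fin, hSm]
      omega
  -- vanishing at the n - 1 points t j, j ≠ z
  have hroots : ∀ x ∈ (Finset.univ.erase z).image t, P.eval x = 0 := by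
    intro x hx
    obtain ⟨j, hj, rfl⟩ := Finset.mem_image.1 hx
    have hjz : j ≠ z := (Finset.mem_erase.1 hj).1
    rw [hPdef, Polynomial.eval_finset_sum]
    set F : Finset (Fin n) → ℂ := fun S => (grassG t z S).eval (t j) with hF
    rw [← Finset.sum_filter_add_sum_filter_not 𝒮 (fun S => z ∈ S) F,
      ← Finset.sum_filter_add_sum_filter_not (𝒮.filter (fun S => z ∈ S)) (fun S => j ∈ S) F,
      ← Finset.sum_filter_add_sum_filter_not (𝒮.filter (fun S => ¬ z ∈ S)) (fun S => j ∈ S) F]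
    have hboth : ∑ S ∈ (𝒮.filter (fun S => z ∈ S)).filter (fun S => j ∈ S), F S = 0 := by
      refine Finset.sum_eq_zero fun S hS => ?_
      rw [Finset.mem_filter] at hS
      obtain ⟨hS1, hjS⟩ := hS
      rw [Finset.mem_filter] at hS1
      obtain ⟨_, hzS⟩ := hS1
      have hjmem : j ∈ S.erase z := Finset.mem_erase.2 ⟨hjz, hjS⟩
      rw [hF]
      simp only [grassG, if_pos hzS, eval_mul, eval_C, eval_prod, eval_sub, eval_X]
      exact mul_eq_zero_of_right _ (Finset.prod_eq_zero hjmem (sub_self _))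
    have hneither :
        ∑ S ∈ (𝒮.filter (fun S => ¬ z ∈ S)).filter (fun S => ¬ j ∈ S), F S = 0 := by
      refine Finset.sum_eq_zero fun S hS => ?_
      rw [Finset.mem_filter] at hS
      obtain ⟨hS1, hjS⟩ := hS
      rw [Finset.mem_filter] at hS1
      obtain ⟨_, hzS⟩ := hS1
      have hjmem : j ∈ Sᶜ.erase z := Finset.mem_erase.2 ⟨hjz, Finset.mem_compl.2 hjS⟩
      rw [hF]
      simp only [grassG, if_neg hzS, eval_mul, eval_C, eval_prod, eval_sub, eval_X]
      exact mul_eq_zero_of_right _ (Finset.prod_eq_zero hjmem (sub_self _))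
    have hcross :
        ∑ S ∈ (𝒮.filter (fun S => z ∈ S)).filter (fun S => ¬ j ∈ S), F S
          = ∑ S ∈ (𝒮.filter (fun S => ¬ z ∈ S)).filter (fun S => j ∈ S), -(F S) := by
      refine Finset.sum_nbij' (fun S => insert j (S.erase z)) (fun S => insert z (S.erase j))
        ?_ ?_ ?_ ?_ ?_
      · intro S hS
        rw [Finset.mem_filter] at hS
        obtain ⟨hS1, hjS⟩ := hS
        rw [Finset.mem_filter] at hS1
        obtain ⟨hSm, hzS⟩ := hS1
        have hm' := hcard S hSm
        have hjT : j ∉ S.erase z := fun h => hjS (Finset.mem_of_mem_erase h)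
        rw [Finset.mem_filter, Finset.mem_filter]
        refine ⟨⟨Finset.mem_powersetCard_univ.2 ?_, ?_⟩, ?_⟩
        · rw [Finset.card_insert_of_notMem hjT, Finset.card_erase_of_mem hzS, hm']
          have : 0 < S.card := Finset.card_pos.2 ⟨z, hzS⟩
          omega
        · intro hmem
          rcases Finset.mem_insert.1 hmem with h | h
          · exact hjz h.symm
          · exact Finset.notMem_erase z S h
        · exact Finset.mem_insert_self _ _
      · intro S hS
        rw [Finset.mem_filter] at hS
        obtain ⟨hS1, hjS⟩ := hS
        rw [Finset.mem_filter] at hS1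
        obtain ⟨hSm, hzS⟩ := hS1
        have hm' := hcard S hSm
        have hzT : z ∉ S.erase j := fun h => hzS (Finset.mem_of_mem_erase h)
        rw [Finset.mem_filter, Finset.mem_filter]
        refine ⟨⟨Finset.mem_powersetCard_univ.2 ?_, ?_⟩, ?_⟩
        · rw [Finset.card_insert_of_notMem hzT, Finset.card_erase_of_mem hjS, hm']
          have : 0 < S.card := Finset.card_pos.2 ⟨j, hjS⟩
          omega
        · exact Finset.mem_insert_self _ _
        · intro hmem
          rcases Finset.mem_insert.1 hmem with h | h
          · exact hjz h
          · exact Finset.notMem_erase j S h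
      · intro S hS
        rw [Finset.mem_filter] at hS
        obtain ⟨hS1, hjS⟩ := hS
        rw [Finset.mem_filter] at hS1
        obtain ⟨_, hzS⟩ := hS1
        have hjT : j ∉ S.erase z := fun h => hjS (Finset.mem_of_mem_erase h)
        show insert z ((insert j (S.erase z)).erase j) = S
        rw [Finset.erase_insert hjT, Finset.insert_erase hzS]
      · intro S hS
        rw [Finset.mem_filter] at hS
        obtain ⟨hS1, hjS⟩ := hS
        rw [Finset.mem_filter] at hS1
        obtain ⟨_, hzS⟩ := hS1
        have hzT : z ∉ S.erase j := fun h => hzS (Finset.mem_of_mem_erase h)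
        show insert j ((insert z (S.erase j)).erase z) = S
        rw [Finset.erase_insert hzT, Finset.insert_erase hjS]
      · intro S hS
        rw [Finset.mem_filter] at hS
        obtain ⟨hS1, hjS⟩ := hS
        rw [Finset.mem_filter] at hS1
        obtain ⟨_, hzS⟩ := hS1
        have hcc := grassG_cancel t ht hjz hzS hjS
        rw [hF]
        simp only
        linear_combination hcc
    rw [hboth, hneither, hcross, zero_add, add_zero, ← Finset.sum_add_distrib]
    simp
  -- conclude P = 0
  have himgcard : ((Finset.univ.erase z).image t).card = n - 1 := by
    rw [Finset.card_image_of_injective _ ht, Finset.card_erase_of_mem (Finset.mem_univ z),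
      Finset.card_univ, Fintype.card_fin]
  have hP0 : P = 0 := by
    refine Polynomial.eq_zero_of_natDegree_lt_card_of_eval_eq_zero' P _ hroots ?_
    rw [himgcard]
    omega
  -- evaluate at t z
  have hD : (∏ k ∈ Finset.univ.erase z, (t z - t k)) ≠ 0 := by
    rw [Finset.prod_ne_zero_iff]
    intro k hk
    exact hne z k fun h => (Finset.mem_erase.1 hk).1 h.symm
  have hden : ∀ S ∈ 𝒮, (∏ i ∈ S, ∏ k ∈ Sᶜ, (t i - t k)) ≠ 0 := by
    intro S hS
    rw [Finset.prod_ne_zero_iff]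
    intro i hi
    rw [Finset.prod_ne_zero_iff]
    intro k hk
    exact hne i k fun h => (Finset.mem_compl.1 hk) (h ▸ hi)
  have hterm : ∀ S ∈ 𝒮, 1 / ∏ i ∈ S, ∏ k ∈ Sᶜ, (t i - t k)
      = (grassG t z S).eval (t z) * (∏ k ∈ Finset.univ.erase z, (t z - t k))⁻¹ := by
    intro S hS
    rw [grassG_eval_z t ht z S, mul_assoc, mul_inv_cancel₀ hD, mul_one, one_div]
  calc ∑ S ∈ 𝒮, 1 / ∏ i ∈ S, ∏ k ∈ Sᶜ, (t i - t k)
      = ∑ S ∈ 𝒮, (grassG t z S).eval (t z) * (∏ k ∈ Finset.univ.erase z, (t z - t k))⁻¹ :=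
        Finset.sum_congr rfl hterm
    _ = (∑ S ∈ 𝒮, (grassG t z S).eval (t z)) * (∏ k ∈ Finset.univ.erase z, (t z - t k))⁻¹ :=
        (Finset.sum_mul _ _ _).symm
    _ = P.eval (t z) * (∏ k ∈ Finset.univ.erase z, (t z - t k))⁻¹ := by
        rw [hPdef, Polynomial.eval_finset_sum]
    _ = 0 := by rw [hP0]; simp
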